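/- In the canonical model M^c(X_0), for any group G ⊆ I, state s ∈ S^c, formula φ, and strategy σ_G all of whose complete executions starting from [s]_G are finite with Kh_G φ ∈ ed(t) for every leaf-node [t]_G ∈ CELeaf(σ_G, s): if there exists an inner-node [s']_G ∈ CEInner(σ_G, s) with ¬Kh_G φ ∈ ed(s'), then there exists an infinite execution of σ_G starting from [s]_G (hence, by contradiction, Kh_G φ ∈ ed(s') for every inner-node [s']_G ∈ CEInner(σ_G, s)). -/

import Mathlib

namespace DKH

/-- Groups of agents: subsets of the finite agent set `I = {i_0, …, i_{n-1}}`. -/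
abbrev Grp (n : ℕ) := Finset (Fin n)

/-- The language DKH: φ ::= ⊤ | p | ¬φ | (φ∧φ) | K_G φ | Kh_G φ. -/
inductive Formula (P : Type) (n : ℕ) : Type
  | top  : Formula P n
  | atom : P → Formula P n
  | neg  : Formula P n → Formula P n
  | and  : Formula P n → Formula P n → Formula P n
  | K    : Grp n → Formula P n → Formula P n
  | Kh   : Grp n → Formula P n → Formula P n

instance {P n} : Inhabited (Formula P n) := ⟨.top⟩

namespace Formula
/-- Defined implication φ → ψ := ¬(φ ∧ ¬ψ). -/
def imp {P n} (φ ψ : Formula P n) : Formula P n := .neg (φ.and ψ.neg)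
/-- Defined falsum ⊥ := ¬⊤. -/
def bot {P : Type} {n : ℕ} : Formula P n := .neg .top
end Formula

/-- A model ⟨S, {∼_i}, {A_G}, {→_a}, V⟩. -/
structure KhModel (P : Type) (n : ℕ) where
  State : Type
  Act : Type
  sim : Fin n → State → State → Prop
  sim_equiv : ∀ i, Equivalence (sim i)
  A : Grp n → Set Act
  A_empty : A ∅ = ∅
  A_disj : ∀ G H : Grp n, G ⊂ H → A G ∩ A H = ∅
  tr : Act → State → State → Prop
  V : P → Set State

/-- Distributed indistinguishability: s ∼_G t iff s ∼_i t for every i ∈ G. -/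
def gsim {P n} (M : KhModel P n) (G : Grp n) (s t : M.State) : Prop :=
  ∀ i ∈ G, M.sim i s t

/-- Distributed actions: atomic group actions, or joint tuples ⟨d_0,…,d_k⟩. -/
inductive DAct (Act : Type) : Type
  | atom : Act → DAct Act
  | joint : List (DAct Act) → DAct Act

mutual
/-- Distributed transition relation: →_{⟨d_0,…,d_k⟩} = ⋂_j →_{d_j}. -/
def dtr {Act State : Type} (tr : Act → State → State → Prop) :
    DAct Act → State → State → Prop
  | .atom a, s, t => tr a s t
  | .joint ds, s, t => dtrList tr ds s t

def dtrList {Act State : Type} (tr : Act → State → State → Prop) :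
    List (DAct Act) → State → State → Prop
  | [], _, _ => True
  | d :: ds, s, t => dtr tr d s t ∧ dtrList tr ds s t
end

/-- `Gs` is a partial partition of `G`: a family of nonempty, pairwise disjoint
blocks, all included in `G` (i.e. a partition of a subset of `G`). -/
def PartialPartition {n : ℕ} (G : Grp n) (Gs : List (Grp n)) : Prop :=
  (∀ B ∈ Gs, B ≠ ∅) ∧ Gs.Pairwise (fun B C => Disjoint B C) ∧ (∀ B ∈ Gs, B ⊆ G)

/-- The fixed ordering on mutually disjoint nonempty groups: G ≺ H iff the
minimal index of an agent in G is below that of H. -/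
def grpLt {n : ℕ} (B C : Grp n) : Prop := B.min < C.min

/-- Membership in the set A*_G of distributed actions of group G:
the closure of A^+_G = ⋃_{G'⊆G} A_{G'} under forming joint actions
⟨d_0,…,d_k⟩ ∈ A*_{G_0} × ⋯ × A*_{G_k} for non-trivial partial partitions
{G_0,…,G_k} of G listed in the fixed order ≺. -/
inductive star {n : ℕ} {Act : Type} (A : Grp n → Set Act) : Grp n → DAct Act → Prop
  | base {G G' : Grp n} {a : Act} :
      G' ⊆ G → a ∈ A G' → star A G (.atom a)
  | joint {G : Grp n} {Gs : List (Grp n)} {ds : List (DAct Act)} :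
      2 ≤ Gs.length → PartialPartition G Gs → Gs.Chain' grpLt →
      List.Forall₂ (star A) Gs ds → star A G (.joint ds)

/-- Membership in A^+_G = ⋃_{G'⊆G} A_{G'} (as a set of distributed actions). -/
def inAplus {n : ℕ} {Act : Type} (A : Grp n → Set Act) (G : Grp n) (d : DAct Act) : Prop :=
  ∃ G' : Grp n, G' ⊆ G ∧ ∃ a ∈ A G', d = .atom a

/-- d is executable on X if every s ∈ X has a d-successor. -/
def ExecutableOn {P n} (M : KhModel P n) (d : DAct M.Act) (X : Set M.State) : Prop :=
  ∀ s ∈ X, ∃ t, dtr M.tr d s t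

/-- A strategy of group G: a partial function from ∼_G-equivalence classes to
A*_G such that the prescribed action is executable on the class. -/
structure Strategy {P n} (M : KhModel P n) (G : Grp n) where
  act : M.State → Option (DAct M.Act)
  uniform : ∀ s t, gsim M G s t → act s = act t
  mem_star : ∀ s d, act s = some d → star M.A G d
  exec : ∀ s d, act s = some d → ∀ t, gsim M G s t → ∃ u, dtr M.tr d t u

/-- One step of an execution: [s]_G →_{σ([s]_G)} [t]_G. -/
def stepRel {P n} {M : KhModel P n} {G : Grp n} (σ : Strategy M G) (s t : M.State) : Prop :=
  ∃ d, σ.act s = some d ∧ ∃ u v, gsim M G s u ∧ gsim M G t v ∧ dtr M.tr d u v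

/-- Leaf-nodes of the finite complete executions of σ starting from [s]_G,
as a ∼_G-closed set of states. -/
def CELeaf {P n} {M : KhModel P n} {G : Grp n} (σ : Strategy M G) (s : M.State) :
    Set M.State :=
  {t | ∃ (m : ℕ) (f : ℕ → M.State), gsim M G s (f 0) ∧
    (∀ j < m, stepRel σ (f j) (f (j+1))) ∧ σ.act (f m) = none ∧ gsim M G (f m) t}

/-- There is an infinite (hence complete) execution of σ starting from [s]_G. -/
def InfiniteFrom {P n} {M : KhModel P n} {G : Grp n} (σ : Strategy M G) (s : M.State) : Prop :=
  ∃ f : ℕ → M.State, gsim M G s (f 0) ∧ ∀ j, stepRel σ (f j) (f (j+1))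

/-- Inner-nodes of the complete executions of σ starting from [s]_G,
as a ∼_G-closed set of states. -/
def CEInner {P n} {M : KhModel P n} {G : Grp n} (σ : Strategy M G) (s : M.State) :
    Set M.State :=
  {t | (∃ (m : ℕ) (f : ℕ → M.State), gsim M G s (f 0) ∧
          (∀ j < m, stepRel σ (f j) (f (j+1))) ∧ σ.act (f m) = none ∧
          ∃ j < m, gsim M G (f j) t) ∨
       (∃ f : ℕ → M.State, gsim M G s (f 0) ∧
          (∀ j, stepRel σ (f j) (f (j+1))) ∧ ∃ j, gsim M G (f j) t)}

/-- Truth at a pointed model. -/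
def Sat {P n} (M : KhModel P n) : M.State → Formula P n → Prop
  | _, .top => True
  | s, .atom p => s ∈ M.V p
  | s, .neg φ => ¬ Sat M s φ
  | s, .and φ ψ => Sat M s φ ∧ Sat M s ψ
  | s, .K G φ => ∀ t, gsim M G s t → Sat M t φ
  | s, .Kh G φ => ∃ σ : Strategy M G,
      (∀ t ∈ CELeaf σ s, Sat M t φ) ∧ ¬ InfiniteFrom σ s

/-- Boolean evaluation treating ⊤, ¬, ∧ as connectives and everything else
as atoms; used to define propositional tautologies. -/
def beval {P n} (v : Formula P n → Bool) : Formula P n → Bool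
  | .top => true
  | .atom p => v (.atom p)
  | .neg φ => !(beval v φ)
  | .and φ ψ => beval v φ && beval v ψ
  | .K G φ => v (.K G φ)
  | .Kh G φ => v (.Kh G φ)

/-- Instances of propositional tautologies. -/
def IsTaut {P n} (φ : Formula P n) : Prop := ∀ v, beval v φ = true

/-- The proof system SDKH. -/
inductive Provable {P : Type} {n : ℕ} : Formula P n → Prop
  | taut {φ} : IsTaut φ → Provable φ
  | distK {G : Grp n} {φ ψ} :
      Provable (((Formula.K G φ).and (Formula.K G (φ.imp ψ))).imp (Formula.K G ψ))
  | axT {G : Grp n} {φ} : Provable ((Formula.K G φ).imp φ)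
  | ax4 {G : Grp n} {φ} : Provable ((Formula.K G φ).imp (Formula.K G (Formula.K G φ)))
  | ax5 {G : Grp n} {φ} :
      Provable ((Formula.neg (Formula.K G φ)).imp (Formula.K G (Formula.neg (Formula.K G φ))))
  | axKMono {G H : Grp n} {φ} : G ⊆ H → Provable ((Formula.K G φ).imp (Formula.K H φ))
  | axKhMono {G H : Grp n} {φ} : G ⊆ H → Provable ((Formula.Kh G φ).imp (Formula.Kh H φ))
  | axKtoKh {G : Grp n} {φ} : Provable ((Formula.K G φ).imp (Formula.Kh G φ))
  | axEmpKhtoK {φ} : Provable ((Formula.Kh ∅ φ).imp (Formula.K ∅ φ))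
  | axKhtoKKh {G : Grp n} {φ} : Provable ((Formula.Kh G φ).imp (Formula.K G (Formula.Kh G φ)))
  | axEmpMono {G : Grp n} {φ ψ} :
      Provable ((Formula.K ∅ (φ.imp ψ)).imp (Formula.K ∅ ((Formula.Kh G φ).imp (Formula.Kh G ψ))))
  | axKhbot {G : Grp n} : Provable ((Formula.Kh G Formula.bot).imp Formula.bot)
  | axKhtoKhK {G : Grp n} {φ} : Provable ((Formula.Kh G φ).imp (Formula.Kh G (Formula.K G φ)))
  | axKhKh {G : Grp n} {φ} : Provable ((Formula.Kh G (Formula.Kh G φ)).imp (Formula.Kh G φ))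
  | mp {φ ψ} : Provable (φ.imp ψ) → Provable φ → Provable ψ
  | necK {G : Grp n} {φ} : Provable φ → Provable (Formula.K G φ)

/-- Conjunction of a finite list of formulas. -/
def conj {P n} (L : List (Formula P n)) : Formula P n := L.foldr Formula.and Formula.top

/-- SDKH-consistency of a set of formulas. -/
def Consistent {P n} (X : Set (Formula P n)) : Prop :=
  ¬ ∃ L : List (Formula P n), (∀ φ ∈ L, φ ∈ X) ∧ Provable ((conj L).imp Formula.bot)

/-- Maximal consistent sets. -/
def MCS {P n} (X : Set (Formula P n)) : Prop :=
  Consistent X ∧ ∀ φ ∉ X, ¬ Consistent (insert φ X)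

/-! ### The canonical model -/

/-- One step ⟨(φ,G),H⟩X of a mixed sequence. -/
structure CStep (P : Type) (n : ℕ) where
  fml : Formula P n
  G : Grp n
  H : Grp n
  X : Set (Formula P n)

instance {P n} : Inhabited (CStep P n) := ⟨⟨.top, ∅, ∅, ∅⟩⟩

/-- The conditions on a mixed sequence X_0⟨(φ_1,G_1),H_1⟩X_1⋯⟨(φ_n,G_n),H_n⟩X_n
(the previous MCS being `X`). -/
def goodFrom {P n} : Set (Formula P n) → List (CStep P n) → Prop
  | _, [] => True
  | X, c :: rest =>
      MCS c.X ∧ c.G ≠ ∅ ∧ (Formula.Kh c.G c.fml) ∈ X ∧ (Formula.K c.G c.fml) ∈ c.X ∧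
      (∀ ψ, (Formula.K c.H ψ) ∈ X → ψ ∈ c.X) ∧ goodFrom c.X rest

/-- The final MCS `ed(s)` of a mixed sequence. -/
def edOf {P n} (X0 : Set (Formula P n)) (l : List (CStep P n)) : Set (Formula P n) :=
  l.foldl (fun _ c => c.X) X0

/-- States of the canonical model: mixed sequences starting at X_0. -/
def CState {P : Type} {n : ℕ} (X0 : Set (Formula P n)) := {l : List (CStep P n) // goodFrom X0 l}

/-- Canonical epistemic relation ∼^c_i. -/
def csim {P n} (X0 : Set (Formula P n)) (i : Fin n) (s t : CState X0) : Prop :=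
  ∃ k : ℕ, k ≤ s.1.length ∧ k ≤ t.1.length ∧
    (∀ j < k, (s.1.getD j default).X = (t.1.getD j default).X ∧
              (s.1.getD j default).H = (t.1.getD j default).H) ∧
    (∀ j, k ≤ j → j < s.1.length → i ∈ (s.1.getD j default).H) ∧
    (∀ j, k ≤ j → j < t.1.length → i ∈ (t.1.getD j default).H)

/-- Canonical atomic actions: pairs (φ, G). -/
abbrev CAct (P : Type) (n : ℕ) := Formula P n × Grp n

/-- Canonical atomic action sets A^c_G = {(φ,G) : φ ∈ DKH} for G ≠ ∅, A^c_∅ = ∅. -/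
def cA {P : Type} {n : ℕ} (G : Grp n) : Set (CAct P n) := {a | a.2 = G ∧ G ≠ ∅}

/-- Canonical transition: s →_{(φ,G)} t iff t = s⟨(φ,G),G'⟩X for some G' and MCS X. -/
def ctr {P n} (X0 : Set (Formula P n)) (a : CAct P n) (s t : CState X0) : Prop :=
  ∃ (G' : Grp n) (Y : Set (Formula P n)), MCS Y ∧ t.1 = s.1 ++ [⟨a.1, a.2, G', Y⟩]

theorem csim_equiv {P n} (X0 : Set (Formula P n)) (i : Fin n) : Equivalence (csim X0 i) := by
  constructor
  · intro s
    exact ⟨s.1.length, le_rfl, le_rfl, fun j _ => ⟨rfl, rfl⟩,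
      fun j h1 h2 => absurd h2 (by omega), fun j h1 h2 => absurd h2 (by omega)⟩
  · rintro s t ⟨k, h1, h2, h3, h4, h5⟩
    exact ⟨k, h2, h1, fun j hj => ⟨(h3 j hj).1.symm, (h3 j hj).2.symm⟩, h5, h4⟩
  · rintro s t u ⟨k1, hk1s, hk1t, heq1, hs1, ht1⟩ ⟨k2, hk2t, hk2u, heq2, ht2, hu2⟩
    refine ⟨min k1 k2, le_trans (min_le_left _ _) hk1s, le_trans (min_le_right _ _) hk2u,
      ?_, ?_, ?_⟩
    · intro j hj
      have e1 := heq1 j (lt_of_lt_of_le hj (min_le_left _ _))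
      have e2 := heq2 j (lt_of_lt_of_le hj (min_le_right _ _))
      exact ⟨e1.1.trans e2.1, e1.2.trans e2.2⟩
    · intro j hj hjs
      by_cases h : k1 ≤ j
      · exact hs1 j h hjs
      · have hj2 : k2 ≤ j := by omega
        have hjt : j < t.1.length := by omega
        have := ht2 j hj2 hjt
        have e := (heq1 j (by omega)).2
        rw [e]; exact this
    · intro j hj hju
      by_cases h : k2 ≤ j
      · exact hu2 j h hju
      · have hj1 : k1 ≤ j := by omega
        have hjt : j < t.1.length := by omega
        have := ht1 j hj1 hjt
        have e := (heq2 j (by omega)).2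
        rw [← e]; exact this

theorem cA_empty {P : Type} {n : ℕ} : (cA (P := P) (n := n) ∅) = ∅ := by
  ext a; simp [cA]

theorem cA_disj {P : Type} {n : ℕ} (G H : Grp n) (h : G ⊂ H) :
    cA (P := P) (n := n) G ∩ cA H = ∅ := by
  ext a
  simp only [Set.mem_inter_iff, Set.mem_empty_iff_false, iff_false, cA, Set.mem_setOf_eq]
  rintro ⟨⟨rfl, -⟩, ⟨h2, -⟩⟩
  exact h.ne h2

/-- The canonical model M^c(X_0). -/
def canonicalModel {P : Type} {n : ℕ} (X0 : Set (Formula P n)) : KhModel P n where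
  State := CState X0
  Act := CAct P n
  sim := csim X0
  sim_equiv := csim_equiv X0
  A := cA
  A_empty := cA_empty
  A_disj := cA_disj
  tr := ctr X0
  V := fun p => {s : CState X0 | Formula.atom p ∈ edOf X0 s.1}



section Lemmas
variable {P : Type} {n : ℕ}

lemma conj_nil : conj ([] : List (Formula P n)) = Formula.top := rfl
lemma conj_cons (χ : Formula P n) (L : List (Formula P n)) :
    conj (χ :: L) = χ.and (conj L) := rfl

/-! ### Tautology instances -/

lemma taut_t1 (a b : Formula P n) :
    Provable (Formula.top.imp (a.imp (b.imp Formula.top))) := by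
  apply Provable.taut; intro v
  simp only [beval, Formula.imp, Formula.bot]
  generalize beval v a = x; generalize beval v b = y
  revert x y; decide

lemma taut_addA (x a b c : Formula P n) :
    Provable ((x.imp (a.imp (b.imp c))).imp (x.imp (a.imp (b.imp (a.and c))))) := by
  apply Provable.taut; intro v
  simp only [beval, Formula.imp, Formula.bot]
  generalize beval v x = bx; generalize beval v a = ba
  generalize beval v b = bb; generalize beval v c = bc
  revert bx ba bb bc; decide

lemma taut_addB (x a b c : Formula P n) :
    Provable ((x.imp (a.imp (b.imp c))).imp (x.imp (a.imp (b.imp (b.and c))))) := by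
  apply Provable.taut; intro v
  simp only [beval, Formula.imp, Formula.bot]
  generalize beval v x = bx; generalize beval v a = ba
  generalize beval v b = bb; generalize beval v c = bc
  revert bx ba bb bc; decide

lemma taut_addD (χ x a b c : Formula P n) :
    Provable ((x.imp (a.imp (b.imp c))).imp ((χ.and x).imp (a.imp (b.imp (χ.and c))))) := by
  apply Provable.taut; intro v
  simp only [beval, Formula.imp, Formula.bot]
  generalize beval v χ = bχ; generalize beval v x = bx; generalize beval v a = ba
  generalize beval v b = bb; generalize beval v c = bc
  revert bχ bx ba bb bc; decide

lemma taut_bot (x a b c : Formula P n) :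
    Provable ((x.imp (a.imp (b.imp c))).imp
      ((c.imp Formula.bot).imp (x.imp (a.imp (b.imp Formula.bot))))) := by
  apply Provable.taut; intro v
  simp only [beval, Formula.imp, Formula.bot]
  generalize beval v x = bx; generalize beval v a = ba
  generalize beval v b = bb; generalize beval v c = bc
  revert bx ba bb bc; decide

lemma taut_t6 (x a : Formula P n) :
    Provable ((x.imp (a.imp (a.imp Formula.bot))).imp (a.imp (x.imp Formula.bot))) := by
  apply Provable.taut; intro v
  simp only [beval, Formula.imp, Formula.bot]
  generalize beval v x = bx; generalize beval v a = ba
  revert bx ba; decide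

lemma taut_t8a (y : Formula P n) : Provable (y.imp (Formula.top.and y)) := by
  apply Provable.taut; intro v
  simp only [beval, Formula.imp, Formula.bot]
  generalize beval v y = a; revert a; decide

lemma taut_t8b (χ d c1 c2 : Formula P n) :
    Provable ((d.imp (c1.and c2)).imp ((χ.and d).imp ((χ.and c1).and c2))) := by
  apply Provable.taut; intro v
  simp only [beval, Formula.imp, Formula.bot]
  generalize beval v χ = bχ; generalize beval v d = bd
  generalize beval v c1 = b1; generalize beval v c2 = b2
  revert bχ bd b1 b2; decide

lemma taut_t9 (c a b x : Formula P n) :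
    Provable ((c.imp (a.and b)).imp ((a.imp (x.imp Formula.bot)).imp
      ((b.imp ((Formula.neg x).imp Formula.bot)).imp (c.imp Formula.bot)))) := by
  apply Provable.taut; intro v
  simp only [beval, Formula.imp, Formula.bot]
  generalize beval v c = bc; generalize beval v a = ba
  generalize beval v b = bb; generalize beval v x = bx
  revert bc ba bb bx; decide

lemma taut_t10 (x : Formula P n) : Provable ((conj [x, Formula.neg x]).imp Formula.bot) := by
  apply Provable.taut; intro v
  simp only [beval, Formula.imp, Formula.bot, conj, List.foldr]
  generalize beval v x = bx; revert bx; decide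

lemma taut_t11 (x y : Formula P n) :
    Provable ((conj [x, x.imp y, Formula.neg y]).imp Formula.bot) := by
  apply Provable.taut; intro v
  simp only [beval, Formula.imp, Formula.bot, conj, List.foldr]
  generalize beval v x = bx; generalize beval v y = by'
  revert bx by'; decide

lemma taut_t12 (p q r : Formula P n) :
    Provable (((p.and q).imp r).imp (q.imp (p.imp r))) := by
  apply Provable.taut; intro v
  simp only [beval, Formula.imp, Formula.bot]
  generalize beval v p = bp; generalize beval v q = bq; generalize beval v r = br
  revert bp bq br; decide

lemma taut_t13 (x y : Formula P n) : Provable (x.imp (y.imp (x.and y))) := by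
  apply Provable.taut; intro v
  simp only [beval, Formula.imp, Formula.bot]
  generalize beval v x = bx; generalize beval v y = by'
  revert bx by'; decide

lemma taut_t14 (x a k : Formula P n) :
    Provable ((x.imp (a.imp ((Formula.neg k).imp Formula.bot))).imp (x.imp (a.imp k))) := by
  apply Provable.taut; intro v
  simp only [beval, Formula.imp, Formula.bot]
  generalize beval v x = bx; generalize beval v a = ba; generalize beval v k = bk
  revert bx ba bk; decide

lemma taut_top : Provable (Formula.top : Formula P n) :=
  Provable.taut (fun _ => rfl)

/-! ### Extraction / finite conjunction lemmas -/

lemma extract (a b : Formula P n) (D : Set (Formula P n)) :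
    ∀ L : List (Formula P n), (∀ χ ∈ L, χ = a ∨ χ = b ∨ χ ∈ D) →
    ∃ L' : List (Formula P n), (∀ χ ∈ L', χ ∈ D) ∧
      Provable ((conj L').imp (a.imp (b.imp (conj L)))) := by
  intro L
  induction L with
  | nil =>
    intro _
    exact ⟨[], by simp, by rw [conj_nil]; exact taut_t1 a b⟩
  | cons χ L ih =>
    intro hmem
    obtain ⟨L', hL', hp⟩ := ih (fun ψ hψ => hmem ψ (List.mem_cons_of_mem _ hψ))
    rcases hmem χ (List.mem_cons_self) with rfl | rfl | hD
    · exact ⟨L', hL', by rw [conj_cons]; exact Provable.mp (taut_addA _ _ _ _) hp⟩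
    · exact ⟨L', hL', by rw [conj_cons]; exact Provable.mp (taut_addB _ _ _ _) hp⟩
    · refine ⟨χ :: L', ?_, ?_⟩
      · intro ψ hψ
        rcases List.mem_cons.1 hψ with rfl | hψ
        · exact hD
        · exact hL' ψ hψ
      · rw [conj_cons, conj_cons]
        exact Provable.mp (taut_addD _ _ _ _ _) hp

lemma provable_conj_append (L1 L2 : List (Formula P n)) :
    Provable ((conj (L1 ++ L2)).imp ((conj L1).and (conj L2))) := by
  induction L1 with
  | nil => rw [List.nil_append, conj_nil]; exact taut_t8a _
  | cons χ L1 ih =>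
    rw [List.cons_append, conj_cons, conj_cons]
    exact Provable.mp (taut_t8b _ _ _ _) ih

/-! ### MCS facts -/

lemma mcs_not_both {X : Set (Formula P n)} (hX : MCS X) {φ : Formula P n}
    (h1 : φ ∈ X) (h2 : Formula.neg φ ∈ X) : False := by
  apply hX.1
  refine ⟨[φ, Formula.neg φ], ?_, taut_t10 φ⟩
  intro χ hχ
  rcases List.mem_cons.1 hχ with rfl | hχ
  · exact h1
  · rcases List.mem_cons.1 hχ with rfl | hχ
    · exact h2
    · simp at hχ

lemma mcs_mem_of_provable {X : Set (Formula P n)} (hX : MCS X) {φ : Formula P n}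
    (hp : Provable φ) : φ ∈ X := by
  by_contra h
  have h1 := hX.2 φ h
  rw [Consistent, not_not] at h1
  obtain ⟨L, hL, hpL⟩ := h1
  obtain ⟨L', hD, hq⟩ := extract φ φ X L (fun χ hχ => by
    have := hL χ hχ
    simp only [Set.mem_insert_iff] at this
    tauto)
  have hq2 := Provable.mp (Provable.mp (taut_bot _ _ _ _) hq) hpL
  have hq3 := Provable.mp (Provable.mp (taut_t6 _ _) hq2) hp
  exact hX.1 ⟨L', hD, hq3⟩

lemma taut_t7 (x a : Formula P n) :
    Provable ((x.imp (a.imp (a.imp Formula.bot))).imp (x.imp (a.imp Formula.bot))) := by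
  apply Provable.taut; intro v
  simp only [beval, Formula.imp, Formula.bot]
  generalize beval v x = bx; generalize beval v a = ba
  revert bx ba; decide

lemma mcs_neg_of_not_mem {X : Set (Formula P n)} (hX : MCS X) {φ : Formula P n}
    (h : φ ∉ X) : Formula.neg φ ∈ X := by
  by_contra hn
  have h1 := hX.2 φ h
  have h2 := hX.2 _ hn
  rw [Consistent, not_not] at h1 h2
  obtain ⟨L1, hL1, hp1⟩ := h1
  obtain ⟨L2, hL2, hp2⟩ := h2
  obtain ⟨L1', hD1, hq1⟩ := extract φ φ X L1 (fun χ hχ => by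
    have := hL1 χ hχ; simp only [Set.mem_insert_iff] at this; tauto)
  obtain ⟨L2', hD2, hq2⟩ := extract (Formula.neg φ) (Formula.neg φ) X L2 (fun χ hχ => by
    have := hL2 χ hχ; simp only [Set.mem_insert_iff] at this; tauto)
  have hr1 : Provable ((conj L1').imp (φ.imp Formula.bot)) :=
    Provable.mp (taut_t7 _ _) (Provable.mp (Provable.mp (taut_bot _ _ _ _) hq1) hp1)
  have hr2 : Provable ((conj L2').imp ((Formula.neg φ).imp Formula.bot)) :=
    Provable.mp (taut_t7 _ _) (Provable.mp (Provable.mp (taut_bot _ _ _ _) hq2) hp2)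
  have hfinal : Provable ((conj (L1' ++ L2')).imp Formula.bot) :=
    Provable.mp (Provable.mp (Provable.mp (taut_t9 _ _ _ _) (provable_conj_append L1' L2')) hr1) hr2
  apply hX.1
  refine ⟨L1' ++ L2', ?_, hfinal⟩
  intro χ hχ
  rcases List.mem_append.1 hχ with h | h
  · exact hD1 χ h
  · exact hD2 χ h

lemma mcs_mp_mem {X : Set (Formula P n)} (hX : MCS X) {φ ψ : Formula P n}
    (h1 : φ ∈ X) (h2 : φ.imp ψ ∈ X) : ψ ∈ X := by
  by_contra h
  have h3 := mcs_neg_of_not_mem hX h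
  apply hX.1
  refine ⟨[φ, φ.imp ψ, Formula.neg ψ], ?_, taut_t11 φ ψ⟩
  intro χ hχ
  rcases List.mem_cons.1 hχ with rfl | hχ
  · exact h1
  rcases List.mem_cons.1 hχ with rfl | hχ
  · exact h2
  rcases List.mem_cons.1 hχ with rfl | hχ
  · exact h3
  · simp at hχ

lemma mcs_mp {X : Set (Formula P n)} (hX : MCS X) {φ ψ : Formula P n}
    (h1 : φ ∈ X) (h2 : Provable (φ.imp ψ)) : ψ ∈ X :=
  mcs_mp_mem hX h1 (mcs_mem_of_provable hX h2)

lemma kdist_mem {X : Set (Formula P n)} (hX : MCS X) {H : Grp n} {α β : Formula P n}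
    (h1 : Formula.K H (α.imp β) ∈ X) (h2 : Formula.K H α ∈ X) : Formula.K H β ∈ X := by
  have hp : Provable ((Formula.K H (α.imp β)).imp ((Formula.K H α).imp (Formula.K H β))) :=
    Provable.mp (taut_t12 _ _ _) Provable.distK
  exact mcs_mp_mem hX h2 (mcs_mp hX h1 hp)

lemma mcs_K_conj {X : Set (Formula P n)} (hX : MCS X) (H : Grp n) :
    ∀ L : List (Formula P n), (∀ χ ∈ L, Formula.K H χ ∈ X) → Formula.K H (conj L) ∈ X := by
  intro L
  induction L with
  | nil =>
    intro _
    exact mcs_mem_of_provable hX (Provable.necK taut_top)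
  | cons χ L ih =>
    intro h
    have hχ := h χ (List.mem_cons_self)
    have hL := ih (fun ψ hψ => h ψ (List.mem_cons_of_mem _ hψ))
    have ht : Formula.K H (χ.imp ((conj L).imp (χ.and (conj L)))) ∈ X :=
      mcs_mem_of_provable hX (Provable.necK (taut_t13 _ _))
    rw [conj_cons]
    exact kdist_mem hX (kdist_mem hX ht hχ) hL

end Lemmas

section Lemmas2
variable {P : Type} {n : ℕ}

/-! ### Lindenbaum -/

lemma chain_finite_mem {c : Set (Set (Formula P n))} (hchain : IsChain (· ⊆ ·) c)
    (hne : c.Nonempty) :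
    ∀ L : List (Formula P n), (∀ χ ∈ L, χ ∈ ⋃₀ c) → ∃ t ∈ c, ∀ χ ∈ L, χ ∈ t := by
  intro L
  induction L with
  | nil => exact fun _ => ⟨hne.choose, hne.choose_spec, by simp⟩
  | cons χ L ih =>
    intro h
    obtain ⟨t, htc, htL⟩ := ih (fun ψ hψ => h ψ (List.mem_cons_of_mem _ hψ))
    obtain ⟨t', ht'c, hχt'⟩ := h χ (List.mem_cons_self)
    by_cases he : t = t'
    · refine ⟨t, htc, fun ψ hψ => ?_⟩
      rcases List.mem_cons.1 hψ with rfl | hψ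
      · rw [he]; exact hχt'
      · exact htL ψ hψ
    · rcases hchain htc ht'c he with hsub | hsub
      · refine ⟨t', ht'c, fun ψ hψ => ?_⟩
        rcases List.mem_cons.1 hψ with rfl | hψ
        exacts [hχt', hsub (htL ψ hψ)]
      · refine ⟨t, htc, fun ψ hψ => ?_⟩
        rcases List.mem_cons.1 hψ with rfl | hψ
        exacts [hsub hχt', htL ψ hψ]

lemma lindenbaum {X : Set (Formula P n)} (h : Consistent X) : ∃ Y, X ⊆ Y ∧ MCS Y := by
  have hub : ∀ c ⊆ {Y : Set (Formula P n) | Consistent Y}, IsChain (· ⊆ ·) c → c.Nonempty →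
      ∃ ub ∈ {Y : Set (Formula P n) | Consistent Y}, ∀ s ∈ c, s ⊆ ub := by
    intro c hcS hchain hcne
    refine ⟨⋃₀ c, ?_, fun s hs => Set.subset_sUnion_of_mem hs⟩
    rintro ⟨L, hL, hp⟩
    obtain ⟨t, htc, htL⟩ := chain_finite_mem hchain hcne L hL
    exact hcS htc ⟨L, htL, hp⟩
  obtain ⟨m, hXm, hmax⟩ :=
    zorn_subset_nonempty {Y : Set (Formula P n) | Consistent Y} hub X h
  refine ⟨m, hXm, hmax.1, ?_⟩
  intro φ hφ hcon
  have hsub : insert φ m ⊆ m := hmax.2 hcon (Set.subset_insert _ _)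
  exact hφ (hsub (Set.mem_insert _ _))

/-! ### Canonical model facts -/

lemma edOf_cons (X : Set (Formula P n)) (c : CStep P n) (l : List (CStep P n)) :
    edOf X (c :: l) = edOf c.X l := rfl

lemma edOf_append (X : Set (Formula P n)) (l : List (CStep P n)) (c : CStep P n) :
    edOf X (l ++ [c]) = c.X := by
  simp [edOf, List.foldl_append]

lemma goodFrom_append :
    ∀ (l : List (CStep P n)) (X : Set (Formula P n)) (c : CStep P n),
    goodFrom X (l ++ [c]) ↔ goodFrom X l ∧ MCS c.X ∧ c.G ≠ ∅ ∧
      Formula.Kh c.G c.fml ∈ edOf X l ∧ Formula.K c.G c.fml ∈ c.X ∧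
      (∀ ψ, Formula.K c.H ψ ∈ edOf X l → ψ ∈ c.X) := by
  intro l
  induction l with
  | nil =>
    intro X c
    simp only [List.nil_append, goodFrom, edOf, List.foldl]
    tauto
  | cons c' l ih =>
    intro X c
    simp only [List.cons_append, goodFrom, edOf_cons, List.append_eq]
    rw [ih]
    tauto

lemma mcs_edOf : ∀ (l : List (CStep P n)) (X : Set (Formula P n)),
    MCS X → goodFrom X l → MCS (edOf X l) := by
  intro l
  induction l with
  | nil => exact fun X hX _ => hX
  | cons c l ih =>
    intro X hX hg
    rw [edOf_cons]
    exact ih c.X hg.1 hg.2.2.2.2.2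

/-! ### gsim and stepRel facts -/

lemma gsim_refl (M : KhModel P n) (G : Grp n) (s : M.State) : gsim M G s s :=
  fun i _ => (M.sim_equiv i).refl s

lemma gsim_symm {M : KhModel P n} {G : Grp n} {s t : M.State} (h : gsim M G s t) :
    gsim M G t s := fun i hi => (M.sim_equiv i).symm (h i hi)

lemma gsim_trans {M : KhModel P n} {G : Grp n} {s t u : M.State}
    (h1 : gsim M G s t) (h2 : gsim M G t u) : gsim M G s u :=
  fun i hi => (M.sim_equiv i).trans (h1 i hi) (h2 i hi)

lemma stepRel_congr_left {M : KhModel P n} {G : Grp n} (σ : Strategy M G)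
    {w w' v : M.State} (hw : gsim M G w w') (h : stepRel σ w v) : stepRel σ w' v := by
  obtain ⟨d, hd, u, v2, h1, h2, h3⟩ := h
  exact ⟨d, (σ.uniform w w' hw).symm.trans hd, u, v2,
    gsim_trans (gsim_symm hw) h1, h2, h3⟩

lemma stepRel_congr_right {M : KhModel P n} {G : Grp n} (σ : Strategy M G)
    {w v v' : M.State} (hv : gsim M G v v') (h : stepRel σ w v) : stepRel σ w v' := by
  obtain ⟨d, hd, u, v2, h1, h2, h3⟩ := h
  exact ⟨d, hd, u, v2, h1, gsim_trans (gsim_symm hv) h2, h3⟩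

/-! ### star actions on the canonical model are atomic -/

lemma star_dtr_atom {X0 : Set (Formula P n)} :
    ∀ (N : ℕ) (d : DAct (CAct P n)), sizeOf d ≤ N → ∀ G : Grp n, star cA G d →
      ∀ w v : CState X0, dtr (ctr X0) d w v →
      ∃ a : CAct P n, a.2 ⊆ G ∧ a.2 ≠ ∅ ∧ ctr X0 a w v := by
  intro N
  induction N with
  | zero =>
    intro d hd
    exfalso
    cases d <;> simp at hd
  | succ N ih =>
    intro d hsize G hs w v hd
    cases hs with
    | base hsub ha =>
      obtain ⟨h1, h2⟩ := ha
      refine ⟨_, h1 ▸ hsub, h1 ▸ h2, ?_⟩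
      simpa [dtr] using hd
    | joint hlen hpp hchain hf =>
      cases hf with
      | nil => simp at hlen
      | @cons B d1 Gs' ds' hB hrest =>
        have hd1 : dtr (ctr X0) d1 w v := by
          simp only [dtr, dtrList] at hd
          exact hd.1
        have hs1 : sizeOf d1 ≤ N := by
          simp at hsize
          omega
        obtain ⟨a, haB, hane, hactr⟩ := ih d1 hs1 B hB w v hd1
        exact ⟨a, haB.trans (hpp.2.2 B (List.mem_cons_self)), hane, hactr⟩

lemma star_exec_atom {X0 : Set (Formula P n)} {G : Grp n} {d : DAct (CAct P n)}
    (hs : star cA G d) {w v : CState X0} (hd : dtr (ctr X0) d w v) :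
    ∃ a : CAct P n, d = .atom a ∧ a.2 ⊆ G ∧ a.2 ≠ ∅ := by
  cases hs with
  | @base _ G' a hsub ha =>
    obtain ⟨h1, h2⟩ := ha
    exact ⟨a, rfl, h1 ▸ hsub, h1 ▸ h2⟩
  | joint hlen hpp hchain hf =>
    exfalso
    rcases hf with _ | ⟨hB1, hf2⟩
    · simp at hlen
    rcases hf2 with _ | ⟨hB2, _⟩
    · simp at hlen
    simp only [dtr, dtrList] at hd
    obtain ⟨hd1, hd2, -⟩ := hd
    obtain ⟨a1, ha1B, ha1ne, hc1⟩ := star_dtr_atom (sizeOf _) _ le_rfl _ hB1 w v hd1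
    obtain ⟨a2, ha2B, ha2ne, hc2⟩ := star_dtr_atom (sizeOf _) _ le_rfl _ hB2 w v hd2
    obtain ⟨H1, Y1, -, he1⟩ := hc1
    obtain ⟨H2, Y2, -, he2⟩ := hc2
    have heq : a1.2 = a2.2 := by
      have h := List.append_cancel_left (he1.symm.trans he2)
      simp only [List.cons.injEq, CStep.mk.injEq] at h
      exact h.1.2.1
    have hdisj : Disjoint _ _ := (List.pairwise_cons.1 hpp.2.1).1 _ (List.mem_cons_self)
    obtain ⟨x, hx⟩ := Finset.nonempty_iff_ne_empty.2 ha1ne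
    exact Finset.disjoint_left.1 hdisj (ha1B hx) (ha2B (heq ▸ hx))

end Lemmas2

section KeyStep
variable {P : Type} {n : ℕ}

lemma key_step {X0 : Set (Formula P n)} (hX0 : MCS X0) {G : Grp n} {φ : Formula P n}
    (σ : Strategy (canonicalModel X0) G) (w : CState X0)
    (hneg : Formula.neg (Formula.Kh G φ) ∈ edOf X0 w.1) {d} (hd : σ.act w = some d) :
    ∃ v : CState X0, stepRel σ w v ∧ Formula.neg (Formula.Kh G φ) ∈ edOf X0 v.1 := by
  have hstar : star cA G d := σ.mem_star w d hd
  obtain ⟨v0, hv0⟩ := σ.exec w d hd w (gsim_refl _ _ _)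
  obtain ⟨a, rfl, hsub, hne⟩ := star_exec_atom hstar (hv0 : dtr (ctr X0) _ w v0)
  have hctr : ctr X0 a w v0 := by simp only [dtr] at hv0; exact hv0
  obtain ⟨H0, Y0, hY0, heq⟩ := hctr
  have hw : MCS (edOf X0 w.1) := mcs_edOf _ _ hX0 w.2
  have hKh' : Formula.Kh a.2 a.1 ∈ edOf X0 w.1 := by
    have hg := v0.2
    rw [heq] at hg
    exact ((goodFrom_append _ _ _).1 hg).2.2.2.1
  set W := edOf X0 w.1 with hWdef
  have hcons : Consistent (insert (Formula.K a.2 a.1)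
      (insert (Formula.neg (Formula.Kh G φ)) {χ | Formula.K ∅ χ ∈ W})) := by
    rintro ⟨L, hL, hp⟩
    obtain ⟨L', hD, hq⟩ := extract _ _ _ L (fun χ hχ => by
      have := hL χ hχ
      simp only [Set.mem_insert_iff] at this
      tauto)
    have hq2 : Provable ((conj L').imp ((Formula.K a.2 a.1).imp
        ((Formula.neg (Formula.Kh G φ)).imp Formula.bot))) :=
      Provable.mp (Provable.mp (taut_bot _ _ _ _) hq) hp
    have hq3 : Provable ((conj L').imp ((Formula.K a.2 a.1).imp (Formula.Kh G φ))) :=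
      Provable.mp (taut_t14 _ _ _) hq2
    have hKconj : Formula.K ∅ (conj L') ∈ W := mcs_K_conj hw ∅ L' (fun χ hχ => hD χ hχ)
    have h5 : Formula.K ∅ ((conj L').imp ((Formula.K a.2 a.1).imp (Formula.Kh G φ))) ∈ W :=
      mcs_mem_of_provable hw (Provable.necK hq3)
    have h6 : Formula.K ∅ ((Formula.K a.2 a.1).imp (Formula.Kh G φ)) ∈ W :=
      kdist_mem hw h5 hKconj
    have h7 : Formula.K ∅ ((Formula.Kh G (Formula.K a.2 a.1)).imp
        (Formula.Kh G (Formula.Kh G φ))) ∈ W :=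
      mcs_mp hw h6 Provable.axEmpMono
    have h8 : (Formula.Kh G (Formula.K a.2 a.1)).imp (Formula.Kh G (Formula.Kh G φ)) ∈ W :=
      mcs_mp hw h7 Provable.axT
    have h9 : Formula.Kh a.2 (Formula.K a.2 a.1) ∈ W := mcs_mp hw hKh' Provable.axKhtoKhK
    have h10 : Formula.Kh G (Formula.K a.2 a.1) ∈ W := mcs_mp hw h9 (Provable.axKhMono hsub)
    have h11 : Formula.Kh G (Formula.Kh G φ) ∈ W := mcs_mp_mem hw h10 h8
    have h12 : Formula.Kh G φ ∈ W := mcs_mp hw h11 Provable.axKhKh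
    exact mcs_not_both hw h12 hneg
  obtain ⟨Y, hsubY, hY⟩ := lindenbaum hcons
  have hgood : goodFrom X0 (w.1 ++ [⟨a.1, a.2, ∅, Y⟩]) := by
    rw [goodFrom_append]
    exact ⟨w.2, hY, hne, hKh', hsubY (Set.mem_insert _ _),
      fun ψ hψ => hsubY (Set.mem_insert_of_mem _ (Set.mem_insert_of_mem _ hψ))⟩
  refine ⟨⟨w.1 ++ [⟨a.1, a.2, ∅, Y⟩], hgood⟩, ?_, ?_⟩
  · exact ⟨.atom a, hd, w, _, gsim_refl _ _ _, gsim_refl _ _ _, ⟨∅, Y, hY, rfl⟩⟩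
  · rw [edOf_append]
    exact hsubY (Set.mem_insert_of_mem _ (Set.mem_insert _ _))

/-- The choice function used to build an infinite execution. -/
noncomputable def nextSt (X0 : Set (Formula P n)) {G : Grp n}
    (σ : Strategy (canonicalModel X0) G) (φ : Formula P n) : CState X0 → CState X0 :=
  fun w =>
    @dite _ (∃ v, stepRel σ w v ∧ Formula.neg (Formula.Kh G φ) ∈ edOf X0 v.1)
      (Classical.dec _) (fun hex => hex.choose) (fun _ => w)

lemma nextSt_spec (X0 : Set (Formula P n)) {G : Grp n}
    (σ : Strategy (canonicalModel X0) G) (φ : Formula P n) (w : CState X0)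
    (hw : ∃ v, stepRel σ w v ∧ Formula.neg (Formula.Kh G φ) ∈ edOf X0 v.1) :
    stepRel σ w (nextSt X0 σ φ w) ∧
      Formula.neg (Formula.Kh G φ) ∈ edOf X0 (nextSt X0 σ φ w).1 := by
  simp only [nextSt]
  show stepRel σ w (nextSt X0 σ φ w) ∧ Formula.neg (Formula.Kh G φ) ∈ edOf X0 (nextSt X0 σ φ w).1
  have e : nextSt X0 σ φ w = hw.choose := dif_pos hw
  rw [e]
  exact hw.choose_spec

end KeyStep

/-- In the canonical model, for any strategy σ_G all of whose
complete executions from [s]_G are finite and with Kh_G φ ∈ ed(t) for every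
leaf-node [t]_G ∈ CELeaf(σ_G,s): if some inner-node [s']_G ∈ CEInner(σ_G,s)
has ¬Kh_G φ ∈ ed(s'), then there is an infinite execution of σ_G from [s]_G
(hence, by contradiction, Kh_G φ ∈ ed(s') for every inner-node). -/
theorem inner_nodes_kh {P : Type} [Countable P] {n : ℕ}
    (X0 : Set (Formula P n)) (hX0 : MCS X0)
    (G : Grp n) (φ : Formula P n) (s : CState X0)
    (σ : Strategy (canonicalModel X0) G)
    (hfin : ¬ InfiniteFrom σ s)
    (hleaf : ∀ t : CState X0, t ∈ CELeaf σ s → Formula.Kh G φ ∈ edOf X0 t.1) :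
    ((∃ s' : CState X0, s' ∈ CEInner σ s ∧
        Formula.neg (Formula.Kh G φ) ∈ edOf X0 s'.1) → InfiniteFrom σ s) ∧
    (∀ s' : CState X0, s' ∈ CEInner σ s → Formula.Kh G φ ∈ edOf X0 s'.1) := by
  have hpart : ∀ s' : CState X0, s' ∈ CEInner σ s →
      Formula.neg (Formula.Kh G φ) ∈ edOf X0 s'.1 → InfiniteFrom σ s := by
    intro s' hin hneg
    rcases hin with ⟨m, f, hf0, hfstep, hfnone, j, hjm, hgj⟩ | ⟨f, hf0, hfstep, j, hgj⟩
    · -- a finite complete execution passes through [s']_G : build an infinite one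
      set nx := nextSt X0 σ φ with hnx
      set F : ℕ → CState X0 := fun i => if i < j then f i else nx^[i - j] s' with hF
      have hFval_lt : ∀ i, i < j → F i = f i := fun i hi => by
        simp only [hF]; exact if_pos hi
      have hFval_ge : ∀ i, j ≤ i → F i = nx^[i - j] s' := fun i hi => by
        have hni : ¬ i < j := by omega
        simp only [hF]; exact if_neg hni
      have hF0 : gsim (canonicalModel X0) G s (F 0) := by
        rcases Nat.eq_zero_or_pos j with hj | hj
        · rw [hFval_ge 0 (by omega), show 0 - j = 0 by omega]
          simp only [Function.iterate_zero, id_eq]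
          rw [hj] at hgj
          exact gsim_trans hf0 hgj
        · rw [hFval_lt 0 hj]
          exact hf0
      have hstepF : ∀ k, (∀ i < k, stepRel σ (nx^[i] s') (nx^[i+1] s')) →
          ∀ i, i < j + k → stepRel σ (F i) (F (i+1)) := by
        intro k hk i hi
        by_cases h1 : i + 1 < j
        · rw [hFval_lt i (by omega), hFval_lt (i+1) h1]
          exact hfstep i (by omega)
        · by_cases h2 : i < j
          · have hij : i + 1 = j := by omega
            rw [hFval_lt i h2, hFval_ge (i+1) (by omega),
              show i + 1 - j = 0 by omega]
            simp only [Function.iterate_zero, id_eq]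
            have hgij : gsim (canonicalModel X0) G (f (i+1)) s' := by
              rw [hij]; exact hgj
            exact stepRel_congr_right σ hgij (hfstep i (by omega))
          · rw [hFval_ge i (by omega), hFval_ge (i+1) (by omega),
              show i + 1 - j = (i - j) + 1 by omega]
            exact hk (i - j) (by omega)
      have hR : ∀ k, Formula.neg (Formula.Kh G φ) ∈ edOf X0 (nx^[k] s').1 ∧
          ∀ i < k, stepRel σ (nx^[i] s') (nx^[i+1] s') := by
        intro k
        induction k with
        | zero =>
          refine ⟨?_, fun i hi => absurd hi (by omega)⟩
          simpa using hneg
        | succ k ih =>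
          obtain ⟨hQ, hS⟩ := ih
          have hsome : ∃ d, σ.act (nx^[k] s') = some d := by
            rcases hact : σ.act (nx^[k] s') with _ | d
            · exfalso
              have hleafmem : (nx^[k] s') ∈ CELeaf σ s := by
                refine ⟨j + k, F, hF0, hstepF k hS, ?_, ?_⟩
                · rw [hFval_ge (j+k) (by omega), show j + k - j = k by omega]
                  exact hact
                · rw [hFval_ge (j+k) (by omega), show j + k - j = k by omega]
                  exact gsim_refl _ _ _
              exact mcs_not_both (mcs_edOf _ _ hX0 (nx^[k] s').2) (hleaf _ hleafmem) hQ
            · exact ⟨d, rfl⟩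
          obtain ⟨d, hd⟩ := hsome
          have hex := key_step hX0 σ (nx^[k] s') hQ hd
          have hns := nextSt_spec X0 σ φ _ hex
          have hsucc : nx^[k+1] s' = nx (nx^[k] s') := Function.iterate_succ_apply' _ _ _
          refine ⟨by rw [hsucc]; exact hns.2, ?_⟩
          intro i hi
          rcases Nat.lt_succ_iff_lt_or_eq.1 hi with hik | rfl
          · exact hS i hik
          · rw [hsucc]; exact hns.1
      exact ⟨F, hF0, fun i => hstepF (i+1) (hR (i+1)).2 i (by omega)⟩
    · exact ⟨f, hf0, hfstep⟩
  refine ⟨fun ⟨s', hin, hneg⟩ => hpart s' hin hneg, ?_⟩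
  intro s' hin
  by_contra hnot
  exact hfin (hpart s' hin (mcs_neg_of_not_mem (mcs_edOf _ _ hX0 s'.2) hnot))


end DKH
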